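/- Let V be a countable type, let G' be a simple graph on V, and let H be a simple graph on V × Bool such that whenever (x,i) and (y,j) are adjacent in H, either x = y or x is adjacent to y in G'. Fix p ∈ [0,1] and set p⊕ := 1 − (1 − p)² = 2p − p², fix a vertex v ∈ V and a set W ⊆ V. Then the μ_p-probability (Bernoulli(p) site percolation on V × Bool) of the event that (v, false) is joined to some vertex of W × {false, true} by a path in H all of whose vertices are open is at most the μ_{p⊕}-probability (Bernoulli(p⊕) site percolation on V) of the event that v is joined to some vertex of W by a path in G' all of whose vertices are open. -/

import Mathlib

set_option maxHeartbeats 1000000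

open MeasureTheory
open scoped ENNReal

/-- The Bernoulli measure on `Bool` with parameter `p ≤ 1`:
it assigns mass `p` to `true` and `1 - p` to `false`. -/
noncomputable abbrev bernoulliMeasure (p : ℝ≥0∞) (hp : p ≤ 1) : Measure Bool :=
  (PMF.ofFintype (fun b => cond b p (1 - p))
    (by simp [Fintype.sum_bool, add_tsub_cancel_of_le hp])).toMeasure

/-- The family of finite-dimensional distributions of the i.i.d. Bernoulli(`p`) field
indexed by `ι`: to each finite set `J ⊆ ι` it assigns the finite product of
Bernoulli(`p`) measures.  A measure `μ` on `ι → Bool` is the infinite product of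
Bernoulli(`p`) measures (the Bernoulli(`p`) site-percolation measure `μ_p`) exactly
when it is the projective limit of this family. -/
noncomputable def bernoulliPiFamily (ι : Type*) (p : ℝ≥0∞) (hp : p ≤ 1) :
    ∀ J : Finset ι, Measure (∀ _ : J, Bool) :=
  fun _J => Measure.pi fun _ => bernoulliMeasure p hp

lemma bern_singleton {p : ℝ≥0∞} (hp : p ≤ 1) (b : Bool) :
    bernoulliMeasure p hp {b} = bif b then p else (1 - p) := by
  rw [PMF.toMeasure_apply_singleton _ _ (measurableSet_singleton _), PMF.ofFintype_apply]

lemma sum_pair {p : ℝ≥0∞} (hp : p ≤ 1) (b : Bool) :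
    ∑ ab ∈ Finset.univ.filter (fun ab : Bool × Bool => (ab.1 || ab.2) = b),
      bernoulliMeasure p hp {ab.1} * bernoulliMeasure p hp {ab.2}
      = bernoulliMeasure (1 - (1 - p) ^ 2) tsub_le_self {b} := by
  have h1 : p + (1 - p) = 1 := add_tsub_cancel_of_le hp
  cases b
  · have he : Finset.univ.filter (fun ab : Bool × Bool => (ab.1 || ab.2) = false)
        = {(false, false)} := by decide
    rw [he, Finset.sum_singleton]
    simp only [bern_singleton, Bool.cond_false]
    rw [ENNReal.sub_sub_cancel ENNReal.one_ne_top (pow_le_one' tsub_le_self 2)]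
    ring
  · rw [Finset.sum_filter, Fintype.sum_prod_type]
    simp only [Fintype.sum_bool, bern_singleton, Bool.cond_true, Bool.cond_false,
      Bool.or_true, Bool.or_false, Bool.true_or, Bool.false_or]
    simp only [if_pos rfl, reduceIte]
    refine (ENNReal.sub_eq_of_eq_add (by
      simp [lt_of_le_of_lt (pow_le_one' (tsub_le_self (a := 1) (b := p)) 2)
        ENNReal.one_lt_top]) ?_).symm
    calc (1 : ℝ≥0∞) = (p + (1 - p)) * (p + (1 - p)) := by rw [h1]; ring
    _ = (p * p + p * (1 - p) + ((1 - p) * p + 0)) + (1 - p) ^ 2 := by ring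

lemma map_or_pi {ι κ : Type*} [Fintype ι] [Fintype κ] [DecidableEq ι] (e : ι × Bool ≃ κ)
    (p : ℝ≥0∞) (hp : p ≤ 1) :
    (Measure.pi fun _ : κ => bernoulliMeasure p hp).map
        (fun τ (i : ι) => τ (e (i, false)) || τ (e (i, true)))
      = Measure.pi fun _ : ι => bernoulliMeasure (1 - (1 - p) ^ 2) tsub_le_self := by
  classical
  apply Measure.ext_of_singleton
  intro σ
  rw [Measure.map_apply (measurable_of_countable _) (measurableSet_singleton σ)]
  set T : ∀ _ : ι, Finset (Bool × Bool) :=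
    fun i => Finset.univ.filter fun ab : Bool × Bool => (ab.1 || ab.2) = σ i with hT
  set Φ : (ι → Bool × Bool) → (κ → Bool) :=
    fun g k => bif (e.symm k).2 then (g (e.symm k).1).2 else (g (e.symm k).1).1 with hΦ
  have hΦe : ∀ (g : ι → Bool × Bool) (i : ι),
      Φ g (e (i, false)) = (g i).1 ∧ Φ g (e (i, true)) = (g i).2 := by
    intro g i
    constructor <;> simp [hΦ, e.symm_apply_apply]
  have hΦinj : Function.Injective Φ := by
    intro g g' h
    funext i
    have h1 := congrFun h (e (i, false))
    have h2 := congrFun h (e (i, true))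
    rw [(hΦe g i).1, (hΦe g' i).1] at h1
    rw [(hΦe g i).2, (hΦe g' i).2] at h2
    exact Prod.ext h1 h2
  have hpre : (fun (τ : κ → Bool) (i : ι) => τ (e (i, false)) || τ (e (i, true))) ⁻¹' {σ}
      = ↑((Fintype.piFinset T).image Φ) := by
    ext τ
    simp only [Set.mem_preimage, Set.mem_singleton_iff, funext_iff, Finset.coe_image,
      Set.mem_image, Finset.mem_coe, Fintype.mem_piFinset, hT, Finset.mem_filter,
      Finset.mem_univ, true_and]
    constructor
    · intro h
      refine ⟨fun i => (τ (e (i, false)), τ (e (i, true))), fun i => h i, ?_⟩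
      intro k
      simp only [hΦ]
      rcases hk : e.symm k with ⟨i, b⟩
      have hek : e (i, b) = k := by rw [← hk, e.apply_symm_apply]
      cases b <;> simp [← hek]
    · rintro ⟨g, hg, hgt⟩ i
      rw [← hgt, ← hgt, (hΦe g i).1, (hΦe g i).2]
      exact hg i
  rw [hpre]
  have hcoe : (↑((Fintype.piFinset T).image Φ) : Set (κ → Bool))
      = ⋃ g ∈ Fintype.piFinset T, {Φ g} := by
    ext x
    simp only [Finset.coe_image, Set.mem_image, Finset.mem_coe, Set.mem_iUnion,
      Set.mem_singleton_iff, eq_comm]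
    tauto
  rw [hcoe, measure_biUnion_finset ?_ (fun _ _ => measurableSet_singleton _)]
  swap
  · intro x _ y _ hxy
    simp only [Function.onFun, Set.disjoint_singleton]
    exact fun h => hxy (hΦinj h)
  have hsing : ∀ g : ι → Bool × Bool, (Measure.pi fun _ : κ => bernoulliMeasure p hp) {Φ g}
      = ∏ i : ι, (bernoulliMeasure p hp {(g i).1} * bernoulliMeasure p hp {(g i).2}) := by
    intro g
    rw [← Set.univ_pi_singleton (Φ g), Measure.pi_pi]
    rw [← Equiv.prod_comp e (fun k => bernoulliMeasure p hp {Φ g k}), Fintype.prod_prod_type]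
    refine Finset.prod_congr rfl fun i _ => ?_
    rw [Fintype.prod_bool, (hΦe g i).1, (hΦe g i).2, mul_comm]
  calc ∑ g ∈ Fintype.piFinset T, (Measure.pi fun _ : κ => bernoulliMeasure p hp) {Φ g}
      = ∑ g ∈ Fintype.piFinset T, ∏ i : ι,
          (bernoulliMeasure p hp {(g i).1} * bernoulliMeasure p hp {(g i).2}) :=
        Finset.sum_congr rfl fun g _ => hsing g
    _ = ∏ i : ι, ∑ ab ∈ T i, (bernoulliMeasure p hp {ab.1} * bernoulliMeasure p hp {ab.2}) :=
        (Finset.prod_univ_sum T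
          (fun _ ab => bernoulliMeasure p hp {ab.1} * bernoulliMeasure p hp {ab.2})).symm
    _ = ∏ i : ι, bernoulliMeasure (1 - (1 - p) ^ 2) tsub_le_self {σ i} :=
        Finset.prod_congr rfl fun i _ => sum_pair hp (σ i)
    _ = (Measure.pi fun _ : ι => bernoulliMeasure (1 - (1 - p) ^ 2) tsub_le_self) {σ} := by
        rw [← Set.univ_pi_singleton σ, Measure.pi_pi]

section graphs
variable {V : Type*} (G' : SimpleGraph V) (ω : V → Bool)

lemma chain_reachable :
    ∀ (l : List V) (a b : V), List.Chain G'.Adj a l →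
      (a :: l).getLast (List.cons_ne_nil _ _) = b →
      (∀ x ∈ a :: l, ω x = true) →
      ∀ (ha : ω a = true) (hb : ω b = true),
      (G'.induce {u | ω u = true}).Reachable ⟨a, ha⟩ ⟨b, hb⟩ := by
  intro l
  induction l with
  | nil =>
    intro a b _ hlast _ ha hb
    cases (show a = b from hlast)
    exact SimpleGraph.Reachable.refl _
  | cons c l ih =>
    intro a b hchain hlast hopen ha hb
    rw [List.Chain, List.chain_cons] at hchain
    have hc : ω c = true := hopen c (by simp)
    have hlast' : (c :: l).getLast (List.cons_ne_nil _ _) = b := by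
      rw [← hlast, List.getLast_cons (List.cons_ne_nil c l)]
    have hadj : (G'.induce {u | ω u = true}).Adj ⟨a, ha⟩ ⟨c, hc⟩ := by
      simp only [SimpleGraph.comap_adj, Function.Embedding.coe_subtype]
      exact hchain.1
    exact hadj.reachable.trans
      (ih c b hchain.2 hlast' (fun x hx => hopen x (List.mem_cons_of_mem _ hx)) hc hb)

lemma walk_to_chain {a b : ↥{u | ω u = true}}
    (w : (G'.induce {u | ω u = true}).Walk a b) :
    ∃ l : List V, List.Chain G'.Adj a.1 l ∧
      (a.1 :: l).getLast (List.cons_ne_nil _ _) = b.1 ∧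
      ∀ x ∈ a.1 :: l, ω x = true := by
  induction w with
  | @nil u =>
    refine ⟨[], List.Chain.nil, rfl, ?_⟩
    intro x hx
    rw [List.mem_singleton] at hx
    subst hx
    exact u.2
  | @cons u c d h w ih =>
    obtain ⟨l, hchain, hlast, hopen⟩ := ih
    refine ⟨c.1 :: l, List.chain_cons.mpr ⟨by simpa using h, hchain⟩, ?_, ?_⟩
    · rw [List.getLast_cons (List.cons_ne_nil _ _)]
      exact hlast
    · intro x hx
      rcases List.mem_cons.mp hx with rfl | hx
      · exact u.2
      · exact hopen x hx

end graphs

lemma proj_reachable {V : Type*} (G' : SimpleGraph V) (H : SimpleGraph (V × Bool))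
    (hH : ∀ (x y : V) (i j : Bool), H.Adj (x, i) (y, j) → x = y ∨ G'.Adj x y)
    (ω : (V × Bool) → Bool)
    (hmem : ∀ u : V × Bool, ω u = true → (ω (u.1, false) || ω (u.1, true)) = true)
    {a b : ↥{u : V × Bool | ω u = true}}
    (w : (H.induce {u | ω u = true}).Walk a b) :
    (G'.induce {x | (ω (x, false) || ω (x, true)) = true}).Reachable
      ⟨a.1.1, hmem _ a.2⟩ ⟨b.1.1, hmem _ b.2⟩ := by
  induction w with
  | nil => exact SimpleGraph.Reachable.refl _
  | @cons u c d h w ih =>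
    have hadj : H.Adj u.1 c.1 := by simpa using h
    rcases hH u.1.1 c.1.1 u.1.2 c.1.2 (by simpa using hadj) with heq | hadj'
    · have he : (⟨u.1.1, hmem _ u.2⟩ : ↥{x | (ω (x, false) || ω (x, true)) = true})
          = ⟨c.1.1, hmem _ c.2⟩ := Subtype.ext heq
      rw [he]
      exact ih
    · refine (SimpleGraph.Adj.reachable ?_).trans ih
      simp only [SimpleGraph.comap_adj, Function.Embedding.coe_subtype]
      exact hadj'

/-- **OR-projection domination for percolation connection events.**
Let `V` be countable, `G'` a simple graph on `V`, and `H` a simple graph on `V × Bool`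
such that adjacency `(x,i) ~ (y,j)` in `H` forces `x = y` or `x ~ y` in `G'`.
Fix `p ≤ 1` and set `p⊕ = 1 − (1 − p)²`, a vertex `v ∈ V` and a set `W ⊆ V`.
Then, for Bernoulli(`p`) site percolation `μ_p` on `V × Bool` and Bernoulli(`p⊕`)
site percolation `μ_{p⊕}` on `V`, the `μ_p`-probability that `(v, false)` is joined to
`W × {false, true}` by an open path of `H` is at most the `μ_{p⊕}`-probability that
`v` is joined to `W` by an open path of `G'`. -/
theorem stmt_6 {V : Type*} [Countable V] (G' : SimpleGraph V)
    (H : SimpleGraph (V × Bool))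
    (hH : ∀ (x y : V) (i j : Bool), H.Adj (x, i) (y, j) → x = y ∨ G'.Adj x y)
    (p : ℝ≥0∞) (hp : p ≤ 1) (v : V) (W : Set V)
    (μp : Measure ((V × Bool) → Bool))
    (hμp : IsProjectiveLimit μp (bernoulliPiFamily (V × Bool) p hp))
    (μq : Measure (V → Bool))
    (hμq : IsProjectiveLimit μq (bernoulliPiFamily V (1 - (1 - p) ^ 2) tsub_le_self)) :
    μp {ω | ∃ (h₀ : ω (v, false) = true), ∃ y ∈ W, ∃ (j : Bool) (h₁ : ω (y, j) = true),
          (H.induce {u | ω u = true}).Reachable ⟨(v, false), h₀⟩ ⟨(y, j), h₁⟩}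
      ≤ μq {ω | ∃ (h₀ : ω v = true), ∃ y ∈ W, ∃ (h₁ : ω y = true),
          (G'.induce {u | ω u = true}).Reachable ⟨v, h₀⟩ ⟨y, h₁⟩} := by
  classical
  set B : Set (V → Bool) := {ω | ∃ (h₀ : ω v = true), ∃ y ∈ W, ∃ (h₁ : ω y = true),
      (G'.induce {u | ω u = true}).Reachable ⟨v, h₀⟩ ⟨y, h₁⟩} with hBdef
  let φ : ((V × Bool) → Bool) → (V → Bool) := fun ω x => ω (x, false) || ω (x, true)
  have hφ : Measurable φ := by
    refine measurable_pi_lambda _ fun x => ?_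
    have hc : Measurable ((fun ab : Bool × Bool => ab.1 || ab.2) ∘
        fun ω : (V × Bool) → Bool => (ω (x, false), ω (x, true))) :=
      (measurable_of_countable (fun ab : Bool × Bool => ab.1 || ab.2)).comp
        ((measurable_pi_apply (x, false)).prodMk (measurable_pi_apply (x, true)))
    exact hc
  -- B is measurable
  have hBeq : B = ⋃ l : List V,
      {ω : V → Bool | (List.Chain G'.Adj v l ∧
          (v :: l).getLast (List.cons_ne_nil _ _) ∈ W) ∧ ∀ x ∈ v :: l, ω x = true} := by
    ext ω
    simp only [hBdef, Set.mem_setOf_eq, Set.mem_iUnion]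
    constructor
    · rintro ⟨h₀, y, hyW, h₁, hr⟩
      obtain ⟨w⟩ := hr
      obtain ⟨l, hchain, hlast, hopen⟩ := walk_to_chain G' ω w
      exact ⟨l, ⟨hchain, hlast ▸ hyW⟩, hopen⟩
    · rintro ⟨l, ⟨hchain, hlastW⟩, hopen⟩
      have h₀ : ω v = true := hopen v List.mem_cons_self
      have hb : ω ((v :: l).getLast (List.cons_ne_nil _ _)) = true :=
        hopen _ (List.getLast_mem _)
      exact ⟨h₀, _, hlastW, hb, chain_reachable G' ω l v _ hchain rfl hopen h₀ hb⟩
  have hB : MeasurableSet B := by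
    rw [hBeq]
    refine MeasurableSet.iUnion fun l => ?_
    have : {ω : V → Bool | (List.Chain G'.Adj v l ∧
          (v :: l).getLast (List.cons_ne_nil _ _) ∈ W) ∧ ∀ x ∈ v :: l, ω x = true}
        = {ω : V → Bool | List.Chain G'.Adj v l ∧
            (v :: l).getLast (List.cons_ne_nil _ _) ∈ W} ∩
          ⋂ x ∈ (v :: l), (fun ω : V → Bool => ω x) ⁻¹' {true} := by
      ext ω; simp [Set.mem_iInter]
    rw [this]
    refine MeasurableSet.inter (MeasurableSet.const _) ?_
    exact MeasurableSet.biInter ((v :: l).finite_toSet.countable)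
      (fun x _ => measurable_pi_apply x (measurableSet_singleton true))
  -- the pushforward identity
  have hmap : μp.map φ = μq := by
    haveI hfin : ∀ J : Finset V,
        IsFiniteMeasure (bernoulliPiFamily V (1 - (1 - p) ^ 2) tsub_le_self J) := fun J => by
      unfold bernoulliPiFamily; infer_instance
    refine IsProjectiveLimit.unique (fun J => ?_) hμq
    set K : Finset (V × Bool) := J ×ˢ (Finset.univ : Finset Bool) with hK
    let e : ↥J × Bool ≃ ↥K :=
      { toFun := fun jb => ⟨(jb.1.1, jb.2), by
          simp only [hK, Finset.mem_product, Finset.mem_univ, and_true]; exact jb.1.2⟩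
        invFun := fun k => (⟨k.1.1, by
          have := k.2
          simp only [hK, Finset.mem_product] at this
          exact this.1⟩, k.1.2)
        left_inv := fun jb => rfl
        right_inv := fun k => rfl }
    have hcomp : (J.restrict (π := fun _ : V => Bool)) ∘ φ
        = (fun τ (j : ↥J) => τ (e (j, false)) || τ (e (j, true))) ∘ K.restrict := rfl
    rw [Measure.map_map (J.measurable_restrict) hφ, hcomp,
      ← Measure.map_map
        (measurable_of_countable (fun (τ : ↥K → Bool) (j : ↥J) => τ (e (j, false)) || τ (e (j, true))))
        (K.measurable_restrict), hμp K]
    show (Measure.pi fun _ : ↥K => bernoulliMeasure p hp).map _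
        = Measure.pi fun _ : ↥J => bernoulliMeasure (1 - (1 - p) ^ 2) tsub_le_self
    exact map_or_pi e p hp
  -- inclusion
  have hmem : ∀ u : V × Bool, ∀ (ω : (V × Bool) → Bool), ω u = true →
      (ω (u.1, false) || ω (u.1, true)) = true := by
    rintro ⟨x, b⟩ ω h
    cases b <;> simp_all
  have hsub : {ω : (V × Bool) → Bool |
        ∃ (h₀ : ω (v, false) = true), ∃ y ∈ W, ∃ (j : Bool) (h₁ : ω (y, j) = true),
        (H.induce {u | ω u = true}).Reachable ⟨(v, false), h₀⟩ ⟨(y, j), h₁⟩} ⊆ φ ⁻¹' B := by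
    rintro ω ⟨h₀, y, hyW, j, h₁, hr⟩
    obtain ⟨w⟩ := hr
    have hr' := proj_reachable G' H hH ω (fun u hu => hmem u ω hu) w
    exact ⟨hmem (v, false) ω h₀, y, hyW, hmem (y, j) ω h₁, hr'⟩
  calc μp {ω | ∃ (h₀ : ω (v, false) = true), ∃ y ∈ W, ∃ (j : Bool) (h₁ : ω (y, j) = true),
        (H.induce {u | ω u = true}).Reachable ⟨(v, false), h₀⟩ ⟨(y, j), h₁⟩}
      ≤ μp (φ ⁻¹' B) := measure_mono hsub
    _ = (μp.map φ) B := (Measure.map_apply hφ hB).symm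
    _ = μq B := by rw [hmap]
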